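/- (Closed form of the left Jacobian Γ₁ of SO(3).) For every nonzero φ ∈ ℝ³, the matrix series Γ₁(φ) := Σ_{n=0}^∞ (1/(n+1)!) φ̂ⁿ converges and equals I₃ + ((1 − cos‖φ‖) / ‖φ‖²) φ̂ + ((‖φ‖ − sin‖φ‖) / ‖φ‖³) φ̂², where ‖φ‖ is the Euclidean norm of φ. -/

import Mathlib

open Matrix

/-- The skew-symmetric (hat) matrix of a vector `φ ∈ ℝ³`, so that `skew φ *ᵥ x = φ × x`. -/
noncomputable def skew (φ : Fin 3 → ℝ) : Matrix (Fin 3) (Fin 3) ℝ :=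
  !![0, -φ 2, φ 1; φ 2, 0, -φ 0; -φ 1, φ 0, 0]

/-- The Euclidean norm of a vector in `ℝ³`. -/
noncomputable def enorm3 (φ : Fin 3 → ℝ) : ℝ :=
  Real.sqrt (∑ i, φ i ^ 2)

lemma skew_cube (φ : Fin 3 → ℝ) :
    skew φ ^ 3 = (-(∑ i, φ i ^ 2)) • skew φ := by
  rw [Fin.sum_univ_three, pow_succ, pow_two]
  ext i j
  fin_cases i <;> fin_cases j <;>
    simp [skew, Matrix.mul_apply, Fin.sum_univ_succ] <;> ring

lemma skew_pow_odd (φ : Fin 3 → ℝ) (k : ℕ) :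
    skew φ ^ (2 * k + 1) = (-(∑ i, φ i ^ 2)) ^ k • skew φ := by
  induction k with
  | zero => simp
  | succ k ih =>
    have h1 : 2 * (k + 1) + 1 = (2 * k + 1) + 2 := by ring
    rw [h1, pow_add, ih, Matrix.smul_mul]
    have h2 : skew φ * skew φ ^ 2 = skew φ ^ 3 := (pow_succ' (skew φ) 2).symm
    rw [h2, skew_cube, smul_smul, ← pow_succ]

lemma skew_pow_even (φ : Fin 3 → ℝ) (k : ℕ) :
    skew φ ^ (2 * k + 2) = (-(∑ i, φ i ^ 2)) ^ k • (skew φ ^ 2) := by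
  have h1 : 2 * k + 2 = (2 * k + 1) + 1 := by ring
  rw [h1, pow_succ, skew_pow_odd, Matrix.smul_mul, ← pow_two]

/-- **Closed form of the left Jacobian `Γ₁` of SO(3)**: for nonzero `φ ∈ ℝ³`, the series
`Γ₁(φ) = Σ_{n=0}^∞ (1/(n+1)!) φ̂ⁿ` converges, with sum
`I₃ + ((1 − cos‖φ‖)/‖φ‖²) φ̂ + ((‖φ‖ − sin‖φ‖)/‖φ‖³) φ̂²`. -/
theorem left_jacobian_closed_form (φ : Fin 3 → ℝ) (hφ : φ ≠ 0) :
    HasSum (fun n : ℕ => (((n + 1).factorial : ℝ))⁻¹ • skew φ ^ n)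
      (1 + ((1 - Real.cos (enorm3 φ)) / enorm3 φ ^ 2) • skew φ
        + ((enorm3 φ - Real.sin (enorm3 φ)) / enorm3 φ ^ 3) • skew φ ^ 2) := by
  set θ := enorm3 φ with hθdef
  obtain ⟨i, hi⟩ : ∃ i, φ i ≠ 0 := Function.ne_iff.mp hφ
  have hsum_pos : 0 < ∑ j, φ j ^ 2 :=
    Finset.sum_pos' (fun j _ => sq_nonneg _) ⟨i, Finset.mem_univ i, by positivity⟩
  have hθ2 : θ ^ 2 = ∑ j, φ j ^ 2 := Real.sq_sqrt hsum_pos.le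
  have hθpos : 0 < θ := Real.sqrt_pos.mpr hsum_pos
  have hθne : θ ≠ 0 := hθpos.ne'
  set c : ℝ := -(∑ j, φ j ^ 2) with hc
  have hcθ : c = -θ ^ 2 := by rw [hc, hθ2]
  -- scalar series for the odd part
  have hodd_scalar : HasSum (fun k : ℕ => c ^ k / ((2 * k + 2).factorial : ℝ))
      ((1 - Real.cos θ) / θ ^ 2) := by
    have h2 : HasSum (fun n : ℕ => (-1 : ℝ) ^ (n + 1) * θ ^ (2 * (n + 1)) /
        ((2 * (n + 1)).factorial : ℝ)) (Real.cos θ - 1) := by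
      refine (hasSum_nat_add_iff
        (f := fun n : ℕ => (-1 : ℝ) ^ n * θ ^ (2 * n) / ((2 * n).factorial : ℝ)) 1).2 ?_
      simpa using Real.hasSum_cos θ
    have h3 := h2.neg.div_const (θ ^ 2)
    have h4 : (fun k : ℕ => -((-1 : ℝ) ^ (k + 1) * θ ^ (2 * (k + 1)) /
        ((2 * (k + 1)).factorial : ℝ)) / θ ^ 2)
        = fun k : ℕ => c ^ k / ((2 * k + 2).factorial : ℝ) := by
      funext k
      have hfac : ((2 * (k + 1)).factorial : ℝ) ≠ 0 :=
        Nat.cast_ne_zero.mpr (Nat.factorial_ne_zero _)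
      rw [hcθ, show ((-θ ^ 2 : ℝ)) ^ k = (-1) ^ k * θ ^ (2 * k) from by
        rw [neg_pow, ← pow_mul]]
      rw [show (2 * (k + 1)) = 2 * k + 2 from by ring]
      rw [show θ ^ (2 * k + 2) = θ ^ (2 * k) * θ ^ 2 from by rw [← pow_add]]
      rw [show (2 * (k + 1)) = 2 * k + 2 from by ring] at hfac
      field_simp
      ring
    rw [h4] at h3
    have h5 : -(Real.cos θ - 1) / θ ^ 2 = (1 - Real.cos θ) / θ ^ 2 := by ring
    rwa [h5] at h3
  -- scalar series for the even (n ≥ 2) part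
  have heven_scalar : HasSum (fun k : ℕ => c ^ k / ((2 * k + 3).factorial : ℝ))
      ((θ - Real.sin θ) / θ ^ 3) := by
    have h2 : HasSum (fun n : ℕ => (-1 : ℝ) ^ (n + 1) * θ ^ (2 * (n + 1) + 1) /
        ((2 * (n + 1) + 1).factorial : ℝ)) (Real.sin θ - θ) := by
      refine (hasSum_nat_add_iff
        (f := fun n : ℕ => (-1 : ℝ) ^ n * θ ^ (2 * n + 1) / ((2 * n + 1).factorial : ℝ)) 1).2 ?_
      simpa using Real.hasSum_sin θ
    have h3 := h2.neg.div_const (θ ^ 3)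
    have h4 : (fun k : ℕ => -((-1 : ℝ) ^ (k + 1) * θ ^ (2 * (k + 1) + 1) /
        ((2 * (k + 1) + 1).factorial : ℝ)) / θ ^ 3)
        = fun k : ℕ => c ^ k / ((2 * k + 3).factorial : ℝ) := by
      funext k
      have hfac : ((2 * (k + 1) + 1).factorial : ℝ) ≠ 0 :=
        Nat.cast_ne_zero.mpr (Nat.factorial_ne_zero _)
      rw [hcθ, show ((-θ ^ 2 : ℝ)) ^ k = (-1) ^ k * θ ^ (2 * k) from by
        rw [neg_pow, ← pow_mul]]
      rw [show (2 * (k + 1) + 1) = 2 * k + 3 from by ring]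
      rw [show θ ^ (2 * k + 3) = θ ^ (2 * k) * θ ^ 3 from by rw [← pow_add]]
      rw [show (2 * (k + 1) + 1) = 2 * k + 3 from by ring] at hfac
      field_simp
      ring
    rw [h4] at h3
    have h5 : -(Real.sin θ - θ) / θ ^ 3 = (θ - Real.sin θ) / θ ^ 3 := by ring
    rwa [h5] at h3
  set f : ℕ → Matrix (Fin 3) (Fin 3) ℝ :=
    fun n => (((n + 1).factorial : ℝ))⁻¹ • skew φ ^ n with hf
  have keyo : ∀ k : ℕ, f (2 * k + 1) = (c ^ k / ((2 * k + 2).factorial : ℝ)) • skew φ := by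
    intro k
    simp only [hf]
    rw [skew_pow_odd, ← hc, smul_smul, div_eq_mul_inv, mul_comm]
  have keye : ∀ k : ℕ, f (2 * (k + 1)) = (c ^ k / ((2 * k + 3).factorial : ℝ)) • skew φ ^ 2 := by
    intro k
    simp only [hf]
    rw [show 2 * (k + 1) = 2 * k + 2 from by ring, skew_pow_even, ← hc, smul_smul,
      div_eq_mul_inv, mul_comm]
  have hodd : HasSum (fun k : ℕ => f (2 * k + 1))
      (((1 - Real.cos θ) / θ ^ 2) • skew φ) := by
    simpa only [keyo] using hodd_scalar.smul_const (skew φ)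
  have heven' : HasSum (fun k : ℕ => f (2 * (k + 1)))
      (((θ - Real.sin θ) / θ ^ 3) • skew φ ^ 2) := by
    simpa only [keye] using heven_scalar.smul_const (skew φ ^ 2)
  have hf0 : f 0 = 1 := by simp [hf]
  have heven : HasSum (fun k : ℕ => f (2 * k))
      (1 + ((θ - Real.sin θ) / θ ^ 3) • skew φ ^ 2) := by
    have h := (hasSum_nat_add_iff (f := fun k : ℕ => f (2 * k)) 1).1 heven'
    simp only [Finset.range_one, Finset.sum_singleton, Nat.mul_zero, hf0] at h
    rw [add_comm]
    exact h
  have htotal := heven.even_add_odd hodd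
  convert htotal using 1
  abel
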